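/- arXiv:1107.2680 — 2 statements merged into one kernel-verified Lean document; each statement's English description precedes it below -/
import Mathlib

section
/- Splitting of a boundary-value integral: for real x with -1 < x < 1, real κ with κ < 1/2, and continuous f : [-1,1] → ℂ, the limit as ε → 0⁺ of ∫_{-1}^{1} f(t)/((x + iε) - t)^{κ+1/2} dt equals ∫_{-1}^{x} f(t)/(x-t)^{κ+1/2} dt + e^{-iπ(κ+1/2)} ∫_{x}^{1} f(t)/(t-x)^{κ+1/2} dt, where w^α = exp(α Log w) with Log the principal branch of the complex logarithm. -/
open Complex MeasureTheory Filter Set intervalIntegral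

lemma aux_abs_rpow_int (x a : ℝ) (ha : a < 1) (c d : ℝ) (hc : c ≤ x) (hd : x ≤ d) :
    IntervalIntegrable (fun t => |x - t| ^ (-a)) volume c d := by
  have hr : (-1 : ℝ) < -a := by linarith
  have h1 : IntervalIntegrable (fun t => (x - t) ^ (-a)) volume c x := by
    have := (intervalIntegrable_rpow' (a := 0) (b := x - c) hr).comp_sub_left x
    simpa using this.symm
  have h2 : IntervalIntegrable (fun t => (t - x) ^ (-a)) volume x d := by
    have := (intervalIntegrable_rpow' (a := 0) (b := d - x) hr).comp_sub_right x
    simpa using this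
  have h1' : IntervalIntegrable (fun t => |x - t| ^ (-a)) volume c x := by
    apply h1.congr
    intro t ht
    rw [uIoc_of_le hc] at ht
    simp only []
    rw [_root_.abs_of_nonneg (by linarith [ht.2] : (0:ℝ) ≤ x - t)]
  have h2' : IntervalIntegrable (fun t => |x - t| ^ (-a)) volume x d := by
    apply h2.congr
    intro t ht
    rw [uIoc_of_le hd] at ht
    simp only []
    rw [_root_.abs_of_nonpos (by linarith [ht.1] : x - t ≤ 0), neg_sub]
  exact h1'.trans h2'


lemma measurable_cpow_const_aux {g : ℝ → ℂ} (hg : Measurable g) (c : ℂ) :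
    Measurable fun t => g t ^ c := by
  have h : (fun t => g t ^ c) = fun t =>
      if g t = 0 then (if c = 0 then 1 else 0) else Complex.exp (Complex.log (g t) * c) := by
    funext t; rw [Complex.cpow_def]
  rw [h]
  exact Measurable.ite (hg (measurableSet_singleton 0)) measurable_const
    ((hg.clog.mul_const c).cexp)

open Complex in
theorem boundary_value_integral_split (x κ : ℝ) (hx : -1 < x) (hx' : x < 1) (hκ : κ < 1 / 2)
    (f : ℝ → ℂ) (hf : ContinuousOn f (Set.Icc (-1 : ℝ) 1)) :
    Filter.Tendsto
      (fun ε : ℝ => ∫ t in (-1 : ℝ)..1, f t / ((↑x + ↑ε * I - ↑t) ^ ((κ : ℂ) + 1 / 2)))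
      (nhdsWithin 0 (Set.Ioi 0))
      (nhds ((∫ t in (-1 : ℝ)..x, f t / (((x : ℂ) - ↑t) ^ ((κ : ℂ) + 1 / 2)))
        + Complex.exp (-(↑Real.pi) * I * ((κ : ℂ) + 1 / 2))
          * ∫ t in x..(1 : ℝ), f t / (((t : ℂ) - ↑x) ^ ((κ : ℂ) + 1 / 2)))) := by
  set a : ℝ := κ + 1 / 2 with ha_def
  have ha1 : a < 1 := by rw [ha_def]; linarith
  have hαa : (κ : ℂ) + 1 / 2 = (a : ℂ) := by rw [ha_def]; push_cast; ring
  simp only [hαa]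
  -- bound for f
  obtain ⟨M, hM⟩ := isCompact_Icc.exists_bound_of_continuousOn hf
  have hM0 : 0 ≤ M := le_trans (norm_nonneg _) (hM x ⟨hx.le, hx'.le⟩)
  -- the bound function
  set B : ℝ → ℝ := fun t => M * ((3 : ℝ) ^ (-a) + |x - t| ^ (-a)) with hB_def
  have hB_int : ∀ c d : ℝ, c ≤ x → x ≤ d → IntervalIntegrable B volume c d := fun c d hc hd =>
    (intervalIntegrable_const.add (aux_abs_rpow_int x a ha1 c d hc hd)).const_mul M
  -- key rpow inequality
  have hkey : ∀ t : ℝ, t ≠ x → ∀ w : ℝ, |x - t| ≤ w → w ≤ 3 →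
      w ^ (-a) ≤ (3 : ℝ) ^ (-a) + |x - t| ^ (-a) := by
    intro t ht w hw1 hw2
    have habs : 0 < |x - t| := abs_pos.mpr (sub_ne_zero.mpr (Ne.symm ht))
    rcases le_or_gt 0 (-a) with h | h
    · calc w ^ (-a) ≤ (3 : ℝ) ^ (-a) := Real.rpow_le_rpow (habs.le.trans hw1) hw2 h
        _ ≤ _ := le_add_of_nonneg_right (Real.rpow_nonneg habs.le _)
    · calc w ^ (-a) ≤ |x - t| ^ (-a) := Real.rpow_le_rpow_of_nonpos habs hw1 h.le
        _ ≤ _ := le_add_of_nonneg_left (Real.rpow_nonneg (by norm_num) _)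
  have hnormeq : ∀ (z : ℂ) (w : ℂ), ‖z / w ^ (a : ℂ)‖ = ‖z‖ * ‖w‖ ^ (-a) := by
    intro z w
    rw [norm_div, norm_cpow_real, Real.rpow_neg (norm_nonneg w),
      div_eq_mul_inv]
  have hcpow_ne : ∀ w : ℂ, w ≠ 0 → w ^ (a : ℂ) ≠ 0 := fun w hw => by
    rw [Complex.cpow_def_of_ne_zero hw]; exact Complex.exp_ne_zero _
  have hne : ∀ᵐ t : ℝ ∂(volume : Measure ℝ), t ≠ x := by
    have hs : {t : ℝ | ¬ t ≠ x} = {x} := by ext t; simp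
    rw [ae_iff, hs]; exact measure_singleton x
  have hIoc : uIoc (-1 : ℝ) 1 = Ioc (-1) 1 := uIoc_of_le (by norm_num)
  set e : ℂ := Complex.exp (-(Real.pi : ℂ) * I * (a : ℂ)) with he_def
  set g₀ : ℝ → ℂ := fun t =>
    if t ≤ x then f t / ((x : ℂ) - t) ^ (a : ℂ) else e * (f t / ((t : ℂ) - x) ^ (a : ℂ))
    with hg₀_def
  have he_norm : ‖e‖ = 1 := by
    rw [he_def, Complex.norm_exp]
    norm_num [Complex.mul_re, Complex.mul_im]
  have hg₀_bound : ∀ t ∈ Ioc (-1 : ℝ) 1, t ≠ x → ‖g₀ t‖ ≤ B t := by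
    intro t ht htx
    have hft := hM t (Ioc_subset_Icc_self ht)
    have h2 : |x - t| ≤ 3 := by
      rw [abs_le]; constructor <;> [linarith [ht.2]; linarith [ht.1]]
    rw [hg₀_def]; dsimp only
    by_cases hle : t ≤ x
    · rw [if_pos hle, hnormeq]
      have habs : ‖(x : ℂ) - t‖ = |x - t| := by
        rw [show ((x : ℂ) - t) = ((x - t : ℝ) : ℂ) by push_cast; ring, Complex.norm_real, Real.norm_eq_abs]
      rw [habs]
      exact mul_le_mul hft (hkey t htx _ le_rfl h2) (Real.rpow_nonneg (abs_nonneg _) _) hM0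
    · rw [if_neg hle, norm_mul, he_norm, one_mul, hnormeq]
      have habs : ‖(t : ℂ) - x‖ = |x - t| := by
        rw [show ((t : ℂ) - x) = ((t - x : ℝ) : ℂ) by push_cast; ring, Complex.norm_real, Real.norm_eq_abs,
          abs_sub_comm]
      rw [habs]
      exact mul_le_mul hft (hkey t htx _ le_rfl h2) (Real.rpow_nonneg (abs_nonneg _) _) hM0
  have hfm : ∀ s : Set ℝ, MeasurableSet s → s ⊆ Icc (-1 : ℝ) 1 →
      AEStronglyMeasurable f (volume.restrict s) := fun s hs hsub =>
    (hf.mono hsub).aestronglyMeasurable hs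
  have hmeas1 : Measurable fun t : ℝ => ((x : ℂ) - t) ^ (a : ℂ) :=
    measurable_cpow_const_aux (measurable_const.sub Complex.measurable_ofReal) _
  have hmeas2 : Measurable fun t : ℝ => ((t : ℂ) - x) ^ (a : ℂ) :=
    measurable_cpow_const_aux (Complex.measurable_ofReal.sub measurable_const) _
  have hInt1 : IntervalIntegrable g₀ volume (-1) x := by
    rw [intervalIntegrable_iff, uIoc_of_le (by linarith : (-1 : ℝ) ≤ x)]
    have hb := (hB_int (-1) x (by linarith) le_rfl).def'
    rw [uIoc_of_le (by linarith : (-1 : ℝ) ≤ x)] at hb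
    apply hb.mono' ?_ ?_
    · apply AEStronglyMeasurable.congr
        (((hfm _ measurableSet_Ioc (fun t ht => ⟨ht.1.le, ht.2.trans hx'.le⟩)).mul
          hmeas1.inv.aestronglyMeasurable))
      filter_upwards [ae_restrict_mem measurableSet_Ioc] with t ht
      rw [hg₀_def]; dsimp only; rw [if_pos ht.2, div_eq_mul_inv]; rfl
    · filter_upwards [ae_restrict_of_ae hne, ae_restrict_mem measurableSet_Ioc] with t htx ht
      exact hg₀_bound t ⟨ht.1, ht.2.trans hx'.le⟩ htx
  have hInt2 : IntervalIntegrable g₀ volume x 1 := by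
    rw [intervalIntegrable_iff, uIoc_of_le hx'.le]
    have hb := (hB_int x 1 le_rfl hx'.le).def'
    rw [uIoc_of_le hx'.le] at hb
    apply hb.mono' ?_ ?_
    · apply AEStronglyMeasurable.congr
        ((((hfm _ measurableSet_Ioc (fun t ht => ⟨hx.le.trans ht.1.le, ht.2⟩)).mul
          hmeas2.inv.aestronglyMeasurable)).const_mul e)
      filter_upwards [ae_restrict_mem measurableSet_Ioc] with t ht
      rw [hg₀_def]; dsimp only; rw [if_neg (not_le.mpr ht.1), div_eq_mul_inv]; rfl
    · filter_upwards [ae_restrict_of_ae hne, ae_restrict_mem measurableSet_Ioc] with t htx ht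
      exact hg₀_bound t ⟨hx.trans ht.1, ht.2⟩ htx
  have htarget : (∫ t in (-1 : ℝ)..x, f t / ((x : ℂ) - t) ^ (a : ℂ))
      + e * ∫ t in x..(1 : ℝ), f t / ((t : ℂ) - x) ^ (a : ℂ) = ∫ t in (-1 : ℝ)..1, g₀ t := by
    rw [← integral_add_adjacent_intervals hInt1 hInt2]
    congr 1
    · apply integral_congr
      intro t ht
      rw [uIcc_of_le (by linarith : (-1 : ℝ) ≤ x)] at ht
      rw [hg₀_def]; dsimp only; rw [if_pos ht.2]
    · rw [← intervalIntegral.integral_const_mul]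
      apply intervalIntegral.integral_congr_ae
      apply Filter.Eventually.of_forall
      intro t ht
      rw [uIoc_of_le hx'.le] at ht
      rw [hg₀_def]; dsimp only; rw [if_neg (not_le.mpr ht.1)]
  rw [htarget]
  apply intervalIntegral.tendsto_integral_filter_of_dominated_convergence B
  · -- measurability
    filter_upwards [self_mem_nhdsWithin] with ε (hε : ε ∈ Ioi (0 : ℝ))
    have hcont : Continuous fun t : ℝ => ((x : ℂ) + ε * I - t) ^ (a : ℂ) := by
      apply Continuous.cpow ((continuous_const.add continuous_const).sub
        (Complex.continuous_ofReal)) continuous_const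
      intro t
      rw [Complex.mem_slitPlane_iff]
      right; simp; exact ne_of_gt hε
    rw [hIoc]
    simp only [div_eq_mul_inv]
    exact (hfm _ measurableSet_Ioc Ioc_subset_Icc_self).mul
      hcont.measurable.inv.aestronglyMeasurable
  · -- bound
    filter_upwards [Ioc_mem_nhdsGT_of_mem (by norm_num : (0:ℝ) ∈ Ico (0:ℝ) 1)] with ε hε
    filter_upwards [hne] with t htx hmem
    rw [hIoc] at hmem
    rw [hnormeq]
    have hwre : ((x : ℂ) + ε * I - t).re = x - t := by simp
    have hwim : ((x : ℂ) + ε * I - t).im = ε := by simp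
    have h1 : |x - t| ≤ ‖(x : ℂ) + ε * I - t‖ := by
      rw [← hwre]; exact Complex.abs_re_le_norm _
    have h2 : ‖(x : ℂ) + ε * I - t‖ ≤ 3 := by
      refine le_trans (Complex.norm_le_abs_re_add_abs_im _) ?_
      rw [hwre, hwim, _root_.abs_of_nonneg hε.1.le]
      have h3 : |x - t| ≤ 2 := by
        rw [abs_le]; constructor <;> [linarith [hmem.2]; linarith [hmem.1]]
      linarith [hε.2]
    exact mul_le_mul (hM t (Ioc_subset_Icc_self hmem)) (hkey t htx _ h1 h2)
      (Real.rpow_nonneg (norm_nonneg _) _) hM0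
  · exact hB_int (-1) 1 (by linarith) (by linarith)
  · -- pointwise limit
    filter_upwards [hne] with t htx hmem
    rw [hIoc] at hmem
    have hbase : Tendsto (fun ε : ℝ => (x : ℂ) + ε * I - t) (nhdsWithin 0 (Ioi 0))
        (nhds ((x : ℂ) - t)) := by
      have hc : Continuous fun ε : ℝ => (x : ℂ) + (ε : ℂ) * I - t :=
        (continuous_const.add (Complex.continuous_ofReal.mul continuous_const)).sub
          continuous_const
      have h0 := (hc.tendsto 0).mono_left (nhdsWithin_le_nhds (s := Ioi (0:ℝ)))
      simpa using h0
    rcases lt_or_gt_of_ne htx with hlt | hgt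
    · -- t < x
      have hz : ((x : ℂ) - t) ∈ Complex.slitPlane := by
        rw [Complex.mem_slitPlane_iff]; left; simp; linarith
      have hc2 := (continuousAt_cpow_const (b := (a : ℂ)) hz).tendsto.comp hbase
      have hzne : ((x : ℂ) - t) ^ (a : ℂ) ≠ 0 := by
        apply hcpow_ne
        rw [sub_ne_zero]
        exact_mod_cast hlt.ne'
      have hres := Filter.Tendsto.div
        (tendsto_const_nhds : Tendsto (fun _ : ℝ => f t) (nhdsWithin 0 (Ioi 0)) (nhds (f t)))
        hc2 hzne
      rw [hg₀_def]; dsimp only; rw [if_pos hlt.le]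
      exact hres
    · -- t > x
      have hup : Tendsto (fun ε : ℝ => (x : ℂ) + ε * I - t) (nhdsWithin 0 (Ioi 0))
          (nhdsWithin ((x : ℂ) - t) {z : ℂ | 0 ≤ z.im}) := by
        apply tendsto_nhdsWithin_of_tendsto_nhds_of_eventually_within _ hbase
        filter_upwards [self_mem_nhdsWithin] with ε (hε : ε ∈ Ioi (0:ℝ))
        show (0:ℝ) ≤ ((x : ℂ) + ε * I - t).im
        simpa using (le_of_lt hε)
      have hre : ((x : ℂ) - t).re < 0 := by simp; linarith
      have him : ((x : ℂ) - t).im = 0 := by simp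
      have hlog := (Complex.tendsto_log_nhdsWithin_im_nonneg_of_re_neg_of_im_zero hre him).comp hup
      have habs : ‖(x : ℂ) - t‖ = t - x := by
        rw [show ((x : ℂ) - t) = ((x - t : ℝ) : ℂ) by push_cast; ring, Complex.norm_real, Real.norm_eq_abs,
          _root_.abs_of_neg (by linarith : x - t < 0), neg_sub]
      rw [habs] at hlog
      have hexp : Tendsto (fun ε : ℝ => ((x : ℂ) + ε * I - t) ^ (a : ℂ)) (nhdsWithin 0 (Ioi 0))
          (nhds (Complex.exp (((Real.log (t - x) : ℂ) + Real.pi * I) * a))) := by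
        have h1 : Tendsto (fun ε : ℝ => Complex.exp (Complex.log ((x : ℂ) + ε * I - t) * a))
            (nhdsWithin 0 (Ioi 0))
            (nhds (Complex.exp (((Real.log (t - x) : ℂ) + Real.pi * I) * a))) :=
          (Complex.continuous_exp.tendsto _).comp (hlog.mul_const (a : ℂ))
        apply h1.congr'
        filter_upwards [self_mem_nhdsWithin] with ε (hε : ε ∈ Ioi (0:ℝ))
        have hwne : ((x : ℂ) + ε * I - t) ≠ 0 := by
          intro h
          have := congrArg Complex.im h
          simp at this
          exact (ne_of_gt hε) this
        rw [Complex.cpow_def_of_ne_zero hwne]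
      have hLne : Complex.exp (((Real.log (t - x) : ℂ) + Real.pi * I) * a) ≠ 0 :=
        Complex.exp_ne_zero _
      have hres := Filter.Tendsto.div
        (tendsto_const_nhds : Tendsto (fun _ : ℝ => f t) (nhdsWithin 0 (Ioi 0)) (nhds (f t)))
        hexp hLne
      rw [hg₀_def]; dsimp only; rw [if_neg (not_le.mpr hgt)]
      have hpos : (0 : ℝ) < t - x := by linarith
      have hcx : ((t : ℂ) - x) ^ (a : ℂ) = Complex.exp ((Real.log (t - x) : ℂ) * a) := by
        rw [show ((t : ℂ) - x) = ((t - x : ℝ) : ℂ) by push_cast; ring,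
          Complex.cpow_def_of_ne_zero (by exact_mod_cast hpos.ne' : ((t - x : ℝ) : ℂ) ≠ 0),
          Complex.ofReal_log hpos.le]
      have heq : e * (f t / ((t : ℂ) - x) ^ (a : ℂ))
          = f t / Complex.exp (((Real.log (t - x) : ℂ) + Real.pi * I) * a) := by
        rw [hcx, he_def,
          show ((Real.log (t - x) : ℂ) + Real.pi * I) * a
            = (Real.log (t - x) : ℂ) * a + Real.pi * I * (a : ℂ) by ring,
          Complex.exp_add,
          show -(Real.pi : ℂ) * I * (a : ℂ) = -(Real.pi * I * (a : ℂ)) by ring,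
          Complex.exp_neg]
        field_simp
      rw [heq]
      exact hres
end

section
/- (Heine's identity, partial sums / closed form) For real t with -1 < t < 1 and real z > 1, the series Σ_{n=0}^{∞} (2n+1) Q_n(z) P_n(t) converges to 1/(z - t), where Q_n(z) = (1/2) ∫_{-1}^{1} P_n(s)/(z - s) ds. -/
/-- The `n`-th Legendre polynomial, via Rodrigues' formula. -/
noncomputable def legendreP (n : ℕ) (x : ℝ) : ℝ :=
  (1 / (2 ^ n * (Nat.factorial n))) * iteratedDeriv n (fun t : ℝ => (t ^ 2 - 1) ^ n) x

open Polynomial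

lemma iter_deriv_add (k : ℕ) (p q : ℝ[X]) :
    derivative^[k] (p + q) = derivative^[k] p + derivative^[k] q := by
  induction k generalizing p q with
  | zero => simp
  | succ k ih => simp [Function.iterate_succ_apply, ih]

lemma iter_deriv_X_mul (m : ℕ) (p : ℝ[X]) :
    derivative^[m + 1] (X * p) =
      X * derivative^[m + 1] p + ((m : ℝ[X]) + 1) * derivative^[m] p := by
  induction m generalizing p with
  | zero => simp [derivative_mul]; ring
  | succ m ih =>
    rw [Function.iterate_succ_apply, derivative_mul, derivative_X, one_mul]
    rw [iter_deriv_add, ih (derivative p)]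
    rw [← Function.iterate_succ_apply derivative m, ← Function.iterate_succ_apply derivative (m+1)]
    push_cast
    ring

lemma iter_deriv_sq_mul (m : ℕ) (p : ℝ[X]) :
    derivative^[m + 2] ((X ^ 2 - 1) * p) =
      (X ^ 2 - 1) * derivative^[m + 2] p + 2 * ((m : ℝ[X]) + 2) * X * derivative^[m + 1] p
        + ((m : ℝ[X]) + 2) * ((m : ℝ[X]) + 1) * derivative^[m] p := by
  have hC2 : (C 2 : ℝ[X]) = 2 := map_ofNat C 2
  have h1 : derivative (X ^ 2 - 1 : ℝ[X]) = 2 * X := by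
    simp [derivative_X_pow]; norm_num
  induction m generalizing p with
  | zero =>
    show derivative (derivative _) = _
    simp [derivative_mul, h1]
    ring
  | succ m ih =>
    rw [Function.iterate_succ_apply, derivative_mul, h1]
    rw [iter_deriv_add, ih (derivative p)]
    have h2 : (2 * X * p : ℝ[X]) = X * (2 * p) := by ring
    rw [h2, iter_deriv_X_mul (m + 1) (2 * p)]
    have h3 : ∀ k : ℕ, derivative^[k] (2 * p : ℝ[X]) = 2 * derivative^[k] p := by
      intro k
      rw [← hC2, iterate_derivative_C_mul]
    rw [h3, h3]
    rw [← Function.iterate_succ_apply derivative (m+1) p,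
        ← Function.iterate_succ_apply derivative (m+2) p,
        ← Function.iterate_succ_apply derivative m p]
    push_cast
    ring

noncomputable def legP (n : ℕ) : ℝ[X] :=
  C (1 / (2 ^ n * (Nat.factorial n : ℝ))) * derivative^[n] ((X ^ 2 - 1) ^ n)

lemma deriv_sq_sub_one : derivative (X ^ 2 - 1 : ℝ[X]) = C 2 * X := by
  have h2 : (C 2 : ℝ[X]) = 2 := map_ofNat C 2
  simp [derivative_X_pow, h2, one_add_one_eq_two]


lemma eval_iterate_deriv (n : ℕ) (p : ℝ[X]) (x : ℝ) :
    iteratedDeriv n (fun t => p.eval t) x = (derivative^[n] p).eval x := by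
  induction n generalizing p x with
  | zero => simp
  | succ m ih =>
    rw [iteratedDeriv_succ']
    have : deriv (fun t => p.eval t) = fun t => (derivative p).eval t := by
      funext t; exact Polynomial.deriv (p := p)
    rw [this, ih, Function.iterate_succ_apply]

lemma legendreP_eq (n : ℕ) (x : ℝ) : legendreP n x = (legP n).eval x := by
  have : (fun t : ℝ => (t ^ 2 - 1) ^ n) = fun t => ((X ^ 2 - 1 : ℝ[X]) ^ n).eval t := by
    funext t; simp
  rw [legendreP, this, eval_iterate_deriv, legP]
  simp

lemma legP_R1 (n : ℕ) : derivative (legP (n + 1)) =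
    X * derivative (legP n) + ((n : ℝ[X]) + 1) * legP n := by
  have hdf : derivative ((X ^ 2 - 1 : ℝ[X]) ^ (n + 1))
      = C (((n : ℝ) + 1) * 2) * (X * (X ^ 2 - 1) ^ n) := by
    rw [derivative_pow, deriv_sq_sub_one]
    push_cast
    rw [C_mul]
    ring
  have step : derivative^[n + 1 + 1] ((X ^ 2 - 1 : ℝ[X]) ^ (n + 1))
      = C (((n : ℝ) + 1) * 2) * (X * derivative^[n + 1] ((X ^ 2 - 1) ^ n)
          + ((n : ℝ[X]) + 1) * derivative^[n] ((X ^ 2 - 1) ^ n)) := by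
    rw [Function.iterate_succ_apply, hdf, iterate_derivative_C_mul,
      iter_deriv_X_mul n ((X ^ 2 - 1) ^ n)]
  have hc : (1 / (2 ^ (n + 1) * ((n + 1).factorial : ℝ))) * (((n : ℝ) + 1) * 2)
      = 1 / (2 ^ n * (n.factorial : ℝ)) := by
    have h1 : ((n.factorial : ℝ)) ≠ 0 := Nat.cast_ne_zero.mpr n.factorial_ne_zero
    rw [Nat.factorial_succ]
    push_cast
    field_simp
    ring
  simp only [legP, derivative_C_mul]
  rw [← Function.iterate_succ_apply' derivative (n + 1), step, ← mul_assoc, ← C_mul, hc,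
    ← Function.iterate_succ_apply' derivative n]
  ring

lemma legP_ode (n : ℕ) :
    (X ^ 2 - 1) * derivative (derivative (legP n)) + 2 * X * derivative (legP n)
      = (n : ℝ[X]) * ((n : ℝ[X]) + 1) * legP n := by
  cases n with
  | zero => simp [legP]
  | succ m =>
    set f : ℝ[X] := (X ^ 2 - 1) ^ (m + 1) with hf
    have key : (X ^ 2 - 1) * derivative f = C (((m : ℝ) + 1) * 2) * (X * f) := by
      rw [hf, derivative_pow, deriv_sq_sub_one]
      push_cast
      rw [C_mul]
      ring
    have key2 := congrArg (derivative^[m + 2]) key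
    rw [iter_deriv_sq_mul m (derivative f), iterate_derivative_C_mul,
      iter_deriv_X_mul (m + 1) f] at key2
    rw [← Function.iterate_succ_apply derivative (m + 2) f,
      ← Function.iterate_succ_apply derivative (m + 1) f,
      ← Function.iterate_succ_apply derivative m f] at key2
    simp only [Nat.succ_eq_add_one, show m + 2 + 1 = m + 3 from rfl, show m + 1 + 1 = m + 2 from rfl] at key2
    have hC : (C (((m : ℝ) + 1) * 2) : ℝ[X]) = ((m : ℝ[X]) + 1) * 2 := by
      push_cast [C_eq_natCast, C_mul, C_add, C_1]
      simp [map_ofNat]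
    rw [hC] at key2
    push_cast at key2
    simp only [legP, derivative_C_mul, ← Function.iterate_succ_apply' derivative (m + 1),
      ← Function.iterate_succ_apply' derivative (m + 2)]
    simp only [Nat.succ_eq_add_one, show m + 2 + 1 = m + 3 from rfl,
      show m + 1 + 1 = m + 2 from rfl, ← hf]
    push_cast
    linear_combination C (1 / (2 ^ (m + 1) * ((m+1).factorial : ℝ))) * key2

lemma legP_R4 (n : ℕ) : ((n : ℝ[X]) + 1) * legP (n + 1)
    = ((n : ℝ[X]) + 1) * X * legP n + (X ^ 2 - 1) * derivative (legP n) := by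
  have hne : ((n : ℝ[X]) + 2) ≠ 0 := by
    have : ((n : ℝ[X]) + 2) = ((n + 2 : ℕ) : ℝ[X]) := by push_cast; ring
    rw [this]
    exact Nat.cast_ne_zero.mpr (by omega)
  apply mul_left_cancel₀ hne
  have A := legP_ode (n + 1)
  have B := legP_ode n
  have D := legP_R1 n
  have Cq := congrArg derivative D
  simp only [derivative_add, derivative_mul, derivative_X, derivative_natCast,
    derivative_one, zero_mul, one_mul, zero_add, add_zero, map_add] at Cq
  push_cast at A B D Cq ⊢
  linear_combination (-1 : ℝ[X]) * A + (X ^ 2 - 1) * Cq + 2 * X * D + X * B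

lemma legP_bonnet (n : ℕ) : ((n : ℝ[X]) + 2) * legP (n + 2)
    = (2 * (n : ℝ[X]) + 3) * X * legP (n + 1) - ((n : ℝ[X]) + 1) * legP n := by
  have F := legP_R4 (n + 1)
  have E := legP_R4 n
  have D := legP_R1 n
  rw [show n + 1 + 1 = n + 2 from rfl] at F
  push_cast at F E D ⊢
  linear_combination F + (X ^ 2 - 1) * D - X * E

lemma legP_zero : legP 0 = 1 := by simp [legP]

lemma legP_one : legP 1 = X := by
  have : legP 1 = C (1 / (2 * 1)) * (C 2 * X) := by
    simp [legP, deriv_sq_sub_one]; exact one_add_one_eq_two.trans (map_ofNat C 2).symm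
  rw [this, ← mul_assoc, ← C_mul]
  norm_num

lemma legP_eval_one (n : ℕ) : (legP n).eval 1 = 1 := by
  induction n with
  | zero => simp [legP_zero]
  | succ m ih =>
    have h := congrArg (eval 1) (legP_R4 m)
    simp [ih] at h
    have hm : ((m : ℝ) + 1) ≠ 0 := by positivity
    field_simp at h
    linarith [h]

lemma legP_eval_negone (n : ℕ) : (legP n).eval (-1) = (-1) ^ n := by
  induction n with
  | zero => simp [legP_zero]
  | succ m ih =>
    have h := congrArg (eval (-1)) (legP_R4 m)
    simp [ih] at h
    have hm : ((m : ℝ) + 1) ≠ 0 := by positivity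
    apply mul_left_cancel₀ hm
    rw [h, pow_succ]
    ring

lemma legP_abs_le (n : ℕ) {x : ℝ} (hx1 : -1 ≤ x) (hx2 : x ≤ 1) :
    |(legP n).eval x| ≤ 1 := by
  rcases Nat.eq_zero_or_pos n with h0 | hn
  · subst h0; simp [legP_zero]
  · have hnR : (0 : ℝ) < n := by exact_mod_cast hn
    set c : ℝ := (n : ℝ) * ((n : ℝ) + 1) with hc
    have hcpos : 0 < c := by positivity
    set p := legP n with hp
    set g : ℝ → ℝ := fun y => (p.eval y) ^ 2 + (1 - y ^ 2) / c * ((derivative p).eval y) ^ 2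
      with hg
    have hode : ∀ y : ℝ, (y ^ 2 - 1) * (derivative (derivative p)).eval y
        + 2 * y * (derivative p).eval y = c * p.eval y := by
      intro y
      have := congrArg (eval y) (legP_ode n)
      simpa using this
    have hderiv : ∀ y : ℝ, HasDerivAt g (2 * y * ((derivative p).eval y) ^ 2 / c) y := by
      intro y
      have h1 := (p.hasDerivAt y).pow 2
      have h2a : HasDerivAt (fun y : ℝ => (1 - y ^ 2) / c) (-2 * y / c) y := by
        have := ((hasDerivAt_pow 2 y).const_sub 1).div_const c
        exact this.congr_deriv (by norm_num)
      have h2 := h2a.mul (((derivative p).hasDerivAt y).pow 2)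
      have h3 := h1.add h2
      refine h3.congr_deriv ?_
      have hode' := hode y
      have hc0 : c ≠ 0 := ne_of_gt hcpos
      norm_num
      field_simp
      linear_combination -((derivative p).eval y * hode')
    have hcont : Continuous g := by
      have : Differentiable ℝ g := fun y => (hderiv y).differentiableAt
      exact this.continuous
    have hdg : ∀ y : ℝ, deriv g y = 2 * y * ((derivative p).eval y) ^ 2 / c := fun y =>
      (hderiv y).deriv
    have hmono : MonotoneOn g (Set.Icc (0 : ℝ) 1) := by
      apply monotoneOn_of_deriv_nonneg (convex_Icc 0 1) hcont.continuousOn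
      · exact fun y _ => ((hderiv y).differentiableAt).differentiableWithinAt
      · intro y hy
        rw [interior_Icc] at hy
        rw [hdg y]
        have : 0 ≤ y := le_of_lt hy.1
        positivity
    have hanti : AntitoneOn g (Set.Icc (-1 : ℝ) 0) := by
      apply antitoneOn_of_deriv_nonpos (convex_Icc (-1) 0) hcont.continuousOn
      · exact fun y _ => ((hderiv y).differentiableAt).differentiableWithinAt
      · intro y hy
        rw [interior_Icc] at hy
        rw [hdg y]
        have hyneg : y ≤ 0 := le_of_lt hy.2
        have h1 : 2 * y * ((derivative p).eval y) ^ 2 ≤ 0 := by nlinarith [sq_nonneg ((derivative p).eval y)]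
        exact div_nonpos_of_nonpos_of_nonneg h1 (le_of_lt hcpos)
    have hg1 : g 1 = 1 := by
      simp [hg, hp, legP_eval_one]
    have hgm1 : g (-1) = 1 := by
      have hsq1 : ((-1 : ℝ) ^ n) ^ 2 = 1 := by
        rw [← pow_mul, mul_comm, pow_mul]
        norm_num
      show (p.eval (-1)) ^ 2 + (1 - (-1 : ℝ) ^ 2) / c * ((derivative p).eval (-1)) ^ 2 = 1
      rw [hp, legP_eval_negone, hsq1]
      norm_num
    have hgx : g x ≤ 1 := by
      rcases le_total x 0 with hx0 | hx0
      · rw [← hgm1]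
        exact hanti ⟨le_refl _, by norm_num⟩ ⟨hx1, hx0⟩ hx1
      · rw [← hg1]
        exact hmono ⟨hx0, hx2⟩ ⟨zero_le_one, le_refl _⟩ hx2
    have hsq : (p.eval x) ^ 2 ≤ 1 := by
      have h4 : 0 ≤ (1 - x ^ 2) / c * ((derivative p).eval x) ^ 2 := by
        have : 0 ≤ 1 - x ^ 2 := by nlinarith
        positivity
      calc (p.eval x) ^ 2 ≤ g x := by rw [hg]; dsimp only; nlinarith
      _ ≤ 1 := hgx
    exact abs_le.mpr ⟨by nlinarith, by nlinarith⟩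

lemma iter_deriv_sq_pow (n j : ℕ) (hj : j ≤ n) :
    ∃ q : ℝ[X], derivative^[j] ((X ^ 2 - 1) ^ n) = (X ^ 2 - 1) ^ (n - j) * q := by
  induction j with
  | zero => exact ⟨1, by simp⟩
  | succ j ih =>
    have hj' : j ≤ n := Nat.le_of_succ_le hj
    obtain ⟨q, hq⟩ := ih hj'
    have hk : n - j = (n - (j + 1)) + 1 := by omega
    refine ⟨C (((n : ℝ) - j)) * (C 2 * X) * q + (X ^ 2 - 1) * derivative q, ?_⟩
    rw [Function.iterate_succ_apply', hq, hk, derivative_mul, derivative_pow, deriv_sq_sub_one]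
    simp only [Nat.add_sub_cancel]
    have : (C ((n : ℝ) - j) : ℝ[X]) = C (((n - (j+1) : ℕ) : ℝ) + 1) := by
      congr 1
      have : ((n - (j+1) : ℕ) : ℝ) = (n : ℝ) - (j + 1 : ℕ) := by
        rw [Nat.cast_sub hj]
      rw [this]
      push_cast
      ring
    rw [this]
    push_cast
    ring

lemma eval_vanish {n j : ℕ} (hj : j < n) {x : ℝ} (hx : x ^ 2 = 1) :
    eval x (derivative^[j] ((X ^ 2 - 1 : ℝ[X]) ^ n)) = 0 := by
  obtain ⟨q, hq⟩ := iter_deriv_sq_pow n j (le_of_lt hj)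
  rw [hq]
  have hk : n - j = (n - j - 1) + 1 := by omega
  rw [hk]
  have hx0 : x * x - 1 = 0 := by nlinarith
  simp [pow_succ, hx0]

open MeasureTheory intervalIntegral in
lemma poly_ibp (p q : ℝ[X]) : ∫ s in (-1:ℝ)..1, (derivative p).eval s * q.eval s
    = p.eval 1 * q.eval 1 - p.eval (-1) * q.eval (-1)
      - ∫ s in (-1:ℝ)..1, p.eval s * (derivative q).eval s := by
  have h := integral_deriv_mul_eq_sub (a := (-1:ℝ)) (b := 1)
    (u := fun s => p.eval s) (v := fun s => q.eval s)
    (u' := fun s => (derivative p).eval s) (v' := fun s => (derivative q).eval s)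
    (fun x _ => p.hasDerivAt x) (fun x _ => q.hasDerivAt x)
    ((derivative p).continuous.intervalIntegrable _ _)
    ((derivative q).continuous.intervalIntegrable _ _)
  rw [integral_add (f := fun s => (derivative p).eval s * q.eval s) (g := fun s => p.eval s * (derivative q).eval s) (((derivative p).continuous.mul q.continuous).intervalIntegrable _ _)
    ((p.continuous.mul (derivative q).continuous).intervalIntegrable _ _)] at h
  linarith

open MeasureTheory in
lemma integral_iter_deriv (n : ℕ) : ∀ (j : ℕ), j ≤ n → ∀ r : ℝ[X],
    ∫ s in (-1:ℝ)..1, (derivative^[j] ((X ^ 2 - 1 : ℝ[X]) ^ n)).eval s * r.eval s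
      = (-1) ^ j * ∫ s in (-1:ℝ)..1, ((X ^ 2 - 1 : ℝ[X]) ^ n).eval s * (derivative^[j] r).eval s := by
  intro j
  induction j with
  | zero => intro _ r; simp
  | succ j ih =>
    intro hj r
    have hjn : j < n := hj
    rw [Function.iterate_succ_apply', poly_ibp (derivative^[j] ((X ^ 2 - 1) ^ n)) r,
      eval_vanish hjn (by norm_num : (1:ℝ) ^ 2 = 1),
      eval_vanish hjn (by norm_num : (-1:ℝ) ^ 2 = 1),
      ih (le_of_lt hjn) (derivative r), ← Function.iterate_succ_apply]
    ring

open MeasureTheory in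
lemma legP_ortho (n : ℕ) (r : ℝ[X]) (hr : r.natDegree < n) :
    ∫ s in (-1:ℝ)..1, (legP n).eval s * r.eval s = 0 := by
  simp only [legP, eval_mul, eval_C, mul_assoc]
  rw [intervalIntegral.integral_const_mul, integral_iter_deriv n n le_rfl r,
    iterate_derivative_eq_zero hr]
  simp

open MeasureTheory in
lemma integral_legP_eq_zero (n : ℕ) (hn : 1 ≤ n) :
    ∫ s in (-1:ℝ)..1, (legP n).eval s = 0 := by
  obtain ⟨m, rfl⟩ : ∃ m, n = m + 1 := ⟨n - 1, by omega⟩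
  have h := legP_ortho (m + 1) 1 (by simp)
  simpa using h

open MeasureTheory

noncomputable def Qf (z : ℝ) (n : ℕ) : ℝ :=
  (1 / 2) * ∫ s in (-1:ℝ)..1, (legP n).eval s / (z - s)

lemma zsub_ne {z : ℝ} (hz : 1 < z) {s : ℝ} (hs : s ∈ Set.uIcc (-1:ℝ) 1) : z - s ≠ 0 := by
  rw [Set.uIcc_of_le (by norm_num)] at hs
  have := hs.2
  intro h
  have : s = z := by linarith
  linarith

lemma contOn_div {z : ℝ} (hz : 1 < z) (p : ℝ[X]) :
    ContinuousOn (fun s : ℝ => p.eval s / (z - s)) (Set.uIcc (-1:ℝ) 1) :=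
  (p.continuous.continuousOn).div
    ((continuous_const.sub continuous_id).continuousOn)
    (fun s hs => zsub_ne hz hs)

lemma intgr_div {z : ℝ} (hz : 1 < z) (p : ℝ[X]) :
    IntervalIntegrable (fun s => p.eval s / (z - s)) volume (-1:ℝ) 1 :=
  (contOn_div hz p).intervalIntegrable

lemma Qf_one {z : ℝ} (hz : 1 < z) : Qf z 1 = z * Qf z 0 - 1 := by
  have hcong : ∀ s ∈ Set.uIcc (-1:ℝ) 1,
      (legP 1).eval s / (z - s) = z * ((legP 0).eval s / (z - s)) - 1 := by
    intro s hs
    have hne := zsub_ne hz hs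
    rw [legP_one, legP_zero]
    simp only [eval_X, eval_one]
    field_simp
    ring
  have h1 : ∫ s in (-1:ℝ)..1, (legP 1).eval s / (z - s)
      = ∫ s in (-1:ℝ)..1, (z * ((legP 0).eval s / (z - s)) - 1) :=
    intervalIntegral.integral_congr hcong
  rw [Qf, h1, intervalIntegral.integral_sub
      (((intgr_div hz (legP 0)).const_mul z)) (intervalIntegrable_const),
    intervalIntegral.integral_const_mul, intervalIntegral.integral_const]
  rw [Qf]
  simp
  ring

lemma Qf_rec {z : ℝ} (hz : 1 < z) (n : ℕ) :
    ((n : ℝ) + 2) * Qf z (n + 2) = (2 * (n : ℝ) + 3) * z * Qf z (n + 1) - ((n : ℝ) + 1) * Qf z n := by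
  have hbon : ∀ s : ℝ, ((n : ℝ) + 2) * (legP (n + 2)).eval s
      = (2 * (n : ℝ) + 3) * s * (legP (n + 1)).eval s - ((n : ℝ) + 1) * (legP n).eval s := by
    intro s
    have := congrArg (eval s) (legP_bonnet n)
    simpa using this
  have hcong : ∀ s ∈ Set.uIcc (-1:ℝ) 1,
      ((n : ℝ) + 2) * ((legP (n + 2)).eval s / (z - s))
        = (2 * (n : ℝ) + 3) * z * ((legP (n + 1)).eval s / (z - s))
          - (2 * (n : ℝ) + 3) * (legP (n + 1)).eval s
          - ((n : ℝ) + 1) * ((legP n).eval s / (z - s)) := by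
    intro s hs
    have hne := zsub_ne hz hs
    field_simp
    linear_combination (hbon s)
  have h1 : ∫ s in (-1:ℝ)..1, ((n : ℝ) + 2) * ((legP (n + 2)).eval s / (z - s))
      = ∫ s in (-1:ℝ)..1, ((2 * (n : ℝ) + 3) * z * ((legP (n + 1)).eval s / (z - s))
          - (2 * (n : ℝ) + 3) * (legP (n + 1)).eval s
          - ((n : ℝ) + 1) * ((legP n).eval s / (z - s))) :=
    intervalIntegral.integral_congr hcong
  have hi1 := (intgr_div hz (legP (n + 1))).const_mul ((2 * (n : ℝ) + 3) * z)
  have hi2 := ((legP (n + 1)).continuous.intervalIntegrable (μ := volume) (-1:ℝ) 1).const_mul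
    (2 * (n : ℝ) + 3)
  have hi3 := (intgr_div hz (legP n)).const_mul ((n : ℝ) + 1)
  rw [intervalIntegral.integral_const_mul, intervalIntegral.integral_sub (hi1.sub hi2) hi3,
    intervalIntegral.integral_sub hi1 hi2, intervalIntegral.integral_const_mul,
    intervalIntegral.integral_const_mul, intervalIntegral.integral_const_mul,
    integral_legP_eq_zero (n + 1) (by omega)] at h1
  simp only [Qf]
  nlinarith [h1]

lemma geom_split {z : ℝ} (hz : 1 < z) (n : ℕ) {s : ℝ} (hs : s ≠ z) (hz0 : z ≠ 0) :
    1 / (z - s) = (∑ k ∈ Finset.range n, s ^ k * (1 / z) ^ (k + 1)) + (s / z) ^ n / (z - s) := by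
  induction n with
  | zero => simp
  | succ n ih =>
    rw [Finset.sum_range_succ]
    have hzs : z - s ≠ 0 := fun h => hs (by linarith)
    rw [ih]
    field_simp
    simp only [div_pow, one_div_pow]
    field_simp
    ring

lemma Qf_bound {z : ℝ} (hz : 1 < z) (n : ℕ) :
    |Qf z n| ≤ (1 / z) ^ n * (1 / (z - 1)) := by
  have hz0 : z ≠ 0 := by linarith
  set r : ℝ[X] := ∑ k ∈ Finset.range n, C ((1 / z) ^ (k + 1)) * X ^ k with hr
  have hcong : ∀ s ∈ Set.uIcc (-1:ℝ) 1,
      (legP n).eval s / (z - s)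
        = (legP n).eval s * r.eval s + (legP n).eval s * ((s / z) ^ n / (z - s)) := by
    intro s hs
    have hne := zsub_ne hz hs
    have hsz : s ≠ z := by intro h; apply hne; rw [h]; ring
    have hgeo := geom_split hz n hsz hz0
    have hre : r.eval s = ∑ k ∈ Finset.range n, s ^ k * (1 / z) ^ (k + 1) := by
      rw [hr]
      rw [eval_finset_sum]
      apply Finset.sum_congr rfl
      intro k _
      rw [eval_mul, eval_C, eval_pow, eval_X, mul_comm]
    rw [hre, div_eq_mul_one_div ((legP n).eval s) (z - s), hgeo]
    ring
  have hzero : ∫ s in (-1:ℝ)..1, (legP n).eval s * r.eval s = 0 := by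
    rcases Nat.eq_zero_or_pos n with h0 | hn
    · subst h0; simp [hr]
    · apply legP_ortho n r
      apply lt_of_le_of_lt (Polynomial.natDegree_sum_le_of_forall_le _ _ (n := n - 1) ?_)
      · omega
      · intro k hk
        apply le_trans (natDegree_mul_le)
        simp only [natDegree_C, natDegree_X_pow, zero_add]
        have := Finset.mem_range.mp hk
        omega
  have hintr : IntervalIntegrable (fun s => (legP n).eval s * r.eval s) volume (-1:ℝ) 1 :=
    ((legP n).continuous.mul r.continuous).intervalIntegrable _ _
  have hint2 : IntervalIntegrable (fun s => (legP n).eval s * ((s / z) ^ n / (z - s)))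
      volume (-1:ℝ) 1 := by
    apply ContinuousOn.intervalIntegrable
    apply ((legP n).continuous.continuousOn).mul
    apply ContinuousOn.div
    · exact ((continuous_id.div_const z).pow n).continuousOn
    · exact (continuous_const.sub continuous_id).continuousOn
    · exact fun s hs => zsub_ne hz hs
  have hQ : Qf z n = (1 / 2) * ∫ s in (-1:ℝ)..1, (legP n).eval s * ((s / z) ^ n / (z - s)) := by
    rw [Qf, intervalIntegral.integral_congr hcong,
      intervalIntegral.integral_add hintr hint2, hzero, zero_add]
  rw [hQ]
  have hbnd : ∀ s ∈ Set.uIoc (-1:ℝ) 1,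
      ‖(legP n).eval s * ((s / z) ^ n / (z - s))‖ ≤ (1 / z) ^ n * (1 / (z - 1)) := by
    intro s hs
    rw [Set.uIoc_of_le (by norm_num)] at hs
    have hs1 : -1 ≤ s := le_of_lt hs.1
    have hs2 : s ≤ 1 := hs.2
    have h1 : |(legP n).eval s| ≤ 1 := legP_abs_le n hs1 hs2
    have h2 : |(s / z) ^ n| ≤ (1 / z) ^ n := by
      rw [abs_pow]
      apply pow_le_pow_left₀ (abs_nonneg _)
      rw [abs_div, abs_of_pos (by linarith : (0:ℝ) < z)]
      rw [div_le_div_iff₀ (by linarith) (by linarith)]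
      have : |s| ≤ 1 := abs_le.mpr ⟨hs1, hs2⟩
      nlinarith
    have h3 : |1 / (z - s)| ≤ 1 / (z - 1) := by
      rw [abs_div, abs_one, abs_of_pos (by linarith : (0:ℝ) < z - s)]
      exact one_div_le_one_div_of_le (by linarith) (by linarith)
    have heq : ‖(legP n).eval s * ((s / z) ^ n / (z - s))‖
        = |(legP n).eval s| * (|(s / z) ^ n| * |1 / (z - s)|) := by
      rw [Real.norm_eq_abs, abs_mul, div_eq_mul_one_div ((s / z) ^ n) (z - s), abs_mul]
    rw [heq]
    have hB : |(s / z) ^ n| * |1 / (z - s)| ≤ (1 / z) ^ n * (1 / (z - 1)) :=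
      mul_le_mul h2 h3 (abs_nonneg _) (pow_nonneg (by positivity) n)
    calc |(legP n).eval s| * (|(s / z) ^ n| * |1 / (z - s)|)
        ≤ 1 * ((1 / z) ^ n * (1 / (z - 1))) :=
          mul_le_mul h1 hB (by positivity) zero_le_one
      _ = (1 / z) ^ n * (1 / (z - 1)) := one_mul _
  have hnorm := intervalIntegral.norm_integral_le_of_norm_le_const hbnd
  rw [abs_mul]
  have h12 : |(1:ℝ) / 2| = 1 / 2 := by norm_num
  rw [h12]
  rw [Real.norm_eq_abs] at hnorm
  have : |(1:ℝ) - (-1)| = 2 := by norm_num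
  rw [this] at hnorm
  linarith

theorem heine_identity (t z : ℝ) (ht : -1 < t) (ht' : t < 1) (hz : 1 < z) :
    HasSum
      (fun n : ℕ => (2 * (n : ℝ) + 1)
        * ((1 / 2) * ∫ s in (-1 : ℝ)..1, legendreP n s / (z - s)) * legendreP n t)
      (1 / (z - t)) := by
  have hzt : z - t ≠ 0 := by intro h; linarith
  have hz1 : (0:ℝ) < z - 1 := by linarith
  have hrz : |1 / z| < 1 := by
    rw [abs_of_pos (by positivity), div_lt_one (by linarith)]
    linarith
  set f : ℕ → ℝ := fun n => (2 * (n : ℝ) + 1) * Qf z n * (legP n).eval t with hf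
  have hfeq : (fun n : ℕ => (2 * (n : ℝ) + 1)
      * ((1 / 2) * ∫ s in (-1 : ℝ)..1, legendreP n s / (z - s)) * legendreP n t) = f := by
    funext n
    have h1 : (fun s : ℝ => legendreP n s / (z - s)) = fun s => (legP n).eval s / (z - s) := by
      funext s; rw [legendreP_eq]
    rw [h1, legendreP_eq, hf]
    simp only [Qf]
  rw [hfeq]
  have hfb : ∀ n : ℕ, |f n| ≤ (2 * (n : ℝ) + 1) * ((1 / z) ^ n * (1 / (z - 1))) := by
    intro n
    rw [hf]
    simp only []
    rw [abs_mul, abs_mul, abs_of_pos (by positivity : (0:ℝ) < 2 * (n : ℝ) + 1), mul_assoc]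
    apply mul_le_mul_of_nonneg_left _ (by positivity)
    have h1 := mul_le_mul (Qf_bound hz n) (legP_abs_le n (le_of_lt ht) (le_of_lt ht'))
      (abs_nonneg _) (by positivity)
    linarith
  have hg : Summable (fun n : ℕ => (2 * (n : ℝ) + 1) * ((1 / z) ^ n * (1 / (z - 1)))) := by
    have h1 : Summable (fun n : ℕ => (n : ℝ) ^ 1 * (1 / z) ^ n) :=
      summable_pow_mul_geometric_of_norm_lt_one 1 (by rwa [Real.norm_eq_abs])
    have h2 : Summable (fun n : ℕ => (1 / z) ^ n) :=
      summable_geometric_of_norm_lt_one (by rwa [Real.norm_eq_abs])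
    have h3 : Summable (fun n : ℕ => (2 * (1 / (z - 1))) * ((n : ℝ) ^ 1 * (1 / z) ^ n)
        + (1 / (z - 1)) * (1 / z) ^ n) := (h1.mul_left _).add (h2.mul_left _)
    apply h3.congr
    intro n
    ring
  have hsum : Summable f :=
    Summable.of_norm_bounded hg (fun n => by rw [Real.norm_eq_abs]; exact hfb n)
  set e : ℕ → ℝ := fun N => ((N : ℝ) + 1)
    * ((legP (N + 1)).eval t * Qf z N - (legP N).eval t * Qf z (N + 1)) with he
  have hA : ∀ N : ℕ, ∑ n ∈ Finset.range (N + 1), f n = (1 / (z - t)) * (1 - e N) := by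
    intro N
    induction N with
    | zero =>
      rw [Finset.sum_range_one]
      have h0 : f 0 = Qf z 0 := by rw [hf]; simp [legP_zero]
      have h1 : e 0 = t * Qf z 0 - Qf z 1 := by rw [he]; simp [legP_one, legP_zero]
      rw [h0, h1, Qf_one hz]
      field_simp
      ring
    | succ N ih =>
      rw [Finset.sum_range_succ, ih]
      have hPB : ∀ s : ℝ, ((N : ℝ) + 2) * (legP (N + 2)).eval s
          = (2 * (N : ℝ) + 3) * s * (legP (N + 1)).eval s - ((N : ℝ) + 1) * (legP N).eval s := by
        intro s
        have := congrArg (eval s) (legP_bonnet N)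
        simpa using this
      have hQR := Qf_rec hz N
      have hstep : e N - e (N + 1) = (z - t) * f (N + 1) := by
        simp only [he, hf, show N + 1 + 1 = N + 2 from rfl]
        push_cast
        linear_combination (-(Qf z (N + 1))) * hPB t + ((legP (N + 1)).eval t) * hQR
      rw [show (1 : ℝ) - e (N + 1) = (1 - e N) + (e N - e (N + 1)) by ring, hstep, mul_add,
        ← mul_assoc, one_div, inv_mul_cancel₀ hzt, one_mul]
  have heb : ∀ N : ℕ, |e N| ≤ ((N : ℝ) + 1)
      * ((1 / z) ^ N * (1 / (z - 1)) + (1 / z) ^ (N + 1) * (1 / (z - 1))) := by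
    intro N
    rw [he]
    simp only []
    rw [abs_mul, abs_of_pos (by positivity : (0:ℝ) < (N : ℝ) + 1)]
    apply mul_le_mul_of_nonneg_left _ (by positivity)
    have h1 : |(legP (N + 1)).eval t * Qf z N| ≤ (1 / z) ^ N * (1 / (z - 1)) := by
      rw [abs_mul]
      have := mul_le_mul (legP_abs_le (N + 1) (le_of_lt ht) (le_of_lt ht')) (Qf_bound hz N)
        (abs_nonneg _) zero_le_one
      linarith
    have h2 : |(legP N).eval t * Qf z (N + 1)| ≤ (1 / z) ^ (N + 1) * (1 / (z - 1)) := by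
      rw [abs_mul]
      have := mul_le_mul (legP_abs_le N (le_of_lt ht) (le_of_lt ht')) (Qf_bound hz (N + 1))
        (abs_nonneg _) zero_le_one
      linarith
    have h3 := abs_sub ((legP (N + 1)).eval t * Qf z N) ((legP N).eval t * Qf z (N + 1))
    linarith
  have hbsum : Summable (fun N : ℕ => ((N : ℝ) + 1)
      * ((1 / z) ^ N * (1 / (z - 1)) + (1 / z) ^ (N + 1) * (1 / (z - 1)))) := by
    have h1 : Summable (fun n : ℕ => (n : ℝ) ^ 1 * (1 / z) ^ n) :=
      summable_pow_mul_geometric_of_norm_lt_one 1 (by rwa [Real.norm_eq_abs])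
    have h2 : Summable (fun n : ℕ => (1 / z) ^ n) :=
      summable_geometric_of_norm_lt_one (by rwa [Real.norm_eq_abs])
    have h3 : Summable (fun n : ℕ =>
        ((1 / (z - 1)) * (1 + 1 / z)) * ((n : ℝ) ^ 1 * (1 / z) ^ n)
        + ((1 / (z - 1)) * (1 + 1 / z)) * (1 / z) ^ n) := (h1.mul_left _).add (h2.mul_left _)
    apply h3.congr
    intro n
    ring
  have hb0 := hbsum.tendsto_atTop_zero
  have he0 : Filter.Tendsto e Filter.atTop (nhds 0) := by
    refine tendsto_of_tendsto_of_tendsto_of_le_of_le (g := fun N : ℕ => -(((N : ℝ) + 1)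
      * ((1 / z) ^ N * (1 / (z - 1)) + (1 / z) ^ (N + 1) * (1 / (z - 1)))))
      (h := fun N : ℕ => ((N : ℝ) + 1)
      * ((1 / z) ^ N * (1 / (z - 1)) + (1 / z) ^ (N + 1) * (1 / (z - 1)))) ?_ hb0 ?_ ?_
    · simpa using hb0.neg
    · intro N
      linarith [(abs_le.mp (heb N)).1]
    · intro N
      exact (abs_le.mp (heb N)).2
  rw [Summable.hasSum_iff_tendsto_nat hsum]
  rw [← Filter.tendsto_add_atTop_iff_nat 1]
  have hcongr : ((fun N : ℕ => ∑ n ∈ Finset.range N, f n) ∘ (fun N => N + 1))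
      = fun N => (1 / (z - t)) * (1 - e N) := by
    funext N
    exact hA N
  have hT : Filter.Tendsto (fun N : ℕ => (1 / (z - t)) * (1 - e N)) Filter.atTop
      (nhds ((1 / (z - t)) * (1 - 0))) := (tendsto_const_nhds.sub he0).const_mul _
  rw [show (fun N : ℕ => ∑ n ∈ Finset.range (N + 1), f n)
      = fun N => (1 / (z - t)) * (1 - e N) from funext hA]
  simpa using hT
end
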